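/- Let n ≥ 1, let A ∈ ℝ^{n×n} be the averaging matrix with all entries 1/n, let B ∈ ℝ^{n×n} be left stochastic, let γ ∈ [0,1], let T ≥ 1, let Q, Q_f, R ∈ ℝ^{n×n}, and let x₀ ∈ Δ. For controls u₀,…,u_{T−1} ∈ Δ and states generated by x_{t+1} = γ·A·x_t + (1−γ)·B·u_t, the total cost Σ_{t=0}^{T−1}(x_tᵀQx_t + u_tᵀRu_t) + x_TᵀQ_f x_T equals x₀ᵀQx₀ + Σ_{t=0}^{T−2} g_Q(u_t) + g_{Q_f}(u_{T−1}), where for a matrix M, g_M(u) = ((γ/n)·𝟙 + (1−γ)·B·u)ᵀ M ((γ/n)·𝟙 + (1−γ)·B·u) + uᵀRu. Consequently, the infimum of the total cost over all (u₀,…,u_{T−1}) ∈ Δ^T equals x₀ᵀQx₀ + (T−1)·inf_{u∈Δ} g_Q(u) + inf_{u∈Δ} g_{Q_f}(u). -/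

import Mathlib

open Matrix

/-- A square real matrix is left stochastic if each of its columns lies in the
probability simplex (entries nonnegative, columns summing to 1). -/
def LeftStochastic {n : ℕ} (M : Matrix (Fin n) (Fin n) ℝ) : Prop :=
  ∀ j, (fun i => M i j) ∈ stdSimplex ℝ (Fin n)

/-- The per-round cost `g_M(u) = ((γ/n)·𝟙 + (1−γ)·B·u)ᵀ M ((γ/n)·𝟙 + (1−γ)·B·u) + uᵀRu`. -/
noncomputable def g {n : ℕ} (γ : ℝ) (B R M : Matrix (Fin n) (Fin n) ℝ) (u : Fin n → ℝ) : ℝ :=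
  ((γ / n) • (fun _ => (1:ℝ)) + (1 - γ) • (B *ᵥ u)) ⬝ᵥ
      (M *ᵥ ((γ / n) • (fun _ => (1:ℝ)) + (1 - γ) • (B *ᵥ u)))
    + u ⬝ᵥ (R *ᵥ u)

/-- Total LQR cost `Σ_{t<T} (x_tᵀQx_t + u_tᵀRu_t) + x_TᵀQ_f x_T`. -/
noncomputable def totalCost {n : ℕ} (T : ℕ) (Q Qf R : Matrix (Fin n) (Fin n) ℝ)
    (x u : ℕ → Fin n → ℝ) : ℝ :=
  (∑ t ∈ Finset.range T, (x t ⬝ᵥ (Q *ᵥ x t) + u t ⬝ᵥ (R *ᵥ u t))) + x T ⬝ᵥ (Qf *ᵥ x T)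

lemma g_continuous {n : ℕ} (γ : ℝ) (B R M : Matrix (Fin n) (Fin n) ℝ) :
    Continuous (g γ B R M) := by
  unfold g
  simp only [dotProduct, mulVec, Pi.add_apply, Pi.smul_apply, smul_eq_mul]
  fun_prop

lemma sum_mulVec_eq_one {n : ℕ} {B : Matrix (Fin n) (Fin n) ℝ} (hB : LeftStochastic B)
    {u : Fin n → ℝ} (hu : u ∈ stdSimplex ℝ (Fin n)) : ∑ i, (B *ᵥ u) i = 1 := by
  simp only [mulVec, dotProduct]
  rw [Finset.sum_comm]
  calc ∑ j, ∑ i, B i j * u j = ∑ j, (∑ i, B i j) * u j := by simp [Finset.sum_mul]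
    _ = ∑ j, u j := Finset.sum_congr rfl fun j _ => by rw [(hB j).2]; ring
    _ = 1 := hu.2

lemma state_formula {n : ℕ} (hn : 1 ≤ n) {B : Matrix (Fin n) (Fin n) ℝ} (hB : LeftStochastic B)
    {γ : ℝ} {T : ℕ} {u x : ℕ → Fin n → ℝ}
    (hu : ∀ t, t < T → u t ∈ stdSimplex ℝ (Fin n))
    (hx0 : ∑ i, x 0 i = 1)
    (hrec : ∀ t, t < T → x (t + 1) =
      γ • ((Matrix.of fun _ _ => (n : ℝ)⁻¹ : Matrix (Fin n) (Fin n) ℝ) *ᵥ x t)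
        + (1 - γ) • (B *ᵥ u t)) :
    ∀ t, t < T → x (t + 1) = (γ / n) • (fun _ => (1:ℝ)) + (1 - γ) • (B *ᵥ u t) := by
  have hn0 : (n : ℝ) ≠ 0 := Nat.cast_ne_zero.mpr (by omega)
  have hsum : ∀ t, t ≤ T → ∑ i, x t i = 1 := by
    intro t
    induction t with
    | zero => intro _; exact hx0
    | succ t ih =>
      intro ht
      have ht' : t < T := by omega
      rw [hrec t ht']
      simp only [Pi.add_apply, Pi.smul_apply, smul_eq_mul, Finset.sum_add_distrib,
        ← Finset.mul_sum]
      rw [sum_mulVec_eq_one hB (hu t ht')]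
      have : ∑ i, ((Matrix.of fun _ _ => (n : ℝ)⁻¹ : Matrix (Fin n) (Fin n) ℝ) *ᵥ x t) i = 1 := by
        simp only [mulVec, dotProduct, Matrix.of_apply, ← Finset.mul_sum]
        rw [ih (le_of_lt ht'), Finset.sum_const, Finset.card_univ, Fintype.card_fin]
        field_simp
        simp
      rw [this]; ring
  intro t ht
  rw [hrec t ht]
  congr 1
  funext i
  simp only [Pi.smul_apply, smul_eq_mul, mulVec, dotProduct, Matrix.of_apply, ← Finset.mul_sum]
  rw [hsum t (le_of_lt ht)]
  field_simp

lemma cost_identity {n T : ℕ} (hT : 1 ≤ T) {γ : ℝ} {B Q Qf R : Matrix (Fin n) (Fin n) ℝ}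
    {u x : ℕ → Fin n → ℝ} (x₀ : Fin n → ℝ) (hx0 : x 0 = x₀)
    (hstep : ∀ t, t < T → x (t + 1) = (γ / n) • (fun _ => (1:ℝ)) + (1 - γ) • (B *ᵥ u t)) :
    totalCost T Q Qf R x u =
      x₀ ⬝ᵥ (Q *ᵥ x₀) + (∑ t ∈ Finset.range (T - 1), g γ B R Q (u t))
        + g γ B R Qf (u (T - 1)) := by
  obtain ⟨S, rfl⟩ : ∃ S, T = S + 1 := ⟨T - 1, by omega⟩
  simp only [Nat.add_sub_cancel]
  have hg : ∀ t, t < S → g γ B R Q (u t) = x (t+1) ⬝ᵥ (Q *ᵥ x (t+1)) + u t ⬝ᵥ (R *ᵥ u t) := by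
    intro t ht
    rw [g, hstep t (by omega)]
  have hlast : x (S + 1) ⬝ᵥ (Qf *ᵥ x (S + 1)) + u S ⬝ᵥ (R *ᵥ u S) = g γ B R Qf (u S) := by
    rw [g, hstep S (by omega)]
  rw [totalCost, Finset.sum_add_distrib, Finset.sum_range_succ' (fun t => x t ⬝ᵥ (Q *ᵥ x t)),
    Finset.sum_range_succ (fun t => u t ⬝ᵥ (R *ᵥ u t)), hx0,
    Finset.sum_congr rfl (fun t ht => hg t (Finset.mem_range.mp ht)),
    ← hlast]
  simp only [Finset.sum_add_distrib]
  ring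

theorem stmt_12 (n : ℕ) (hn : 1 ≤ n)
    (A : Matrix (Fin n) (Fin n) ℝ) (hA : A = Matrix.of fun _ _ => (n : ℝ)⁻¹)
    (B : Matrix (Fin n) (Fin n) ℝ) (hB : LeftStochastic B)
    (γ : ℝ) (hγ : γ ∈ Set.Icc (0:ℝ) 1) (T : ℕ) (hT : 1 ≤ T)
    (Q Qf R : Matrix (Fin n) (Fin n) ℝ)
    (x₀ : Fin n → ℝ) (hx₀ : x₀ ∈ stdSimplex ℝ (Fin n)) :
    (∀ u x : ℕ → Fin n → ℝ,
        (∀ t, t < T → u t ∈ stdSimplex ℝ (Fin n)) →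
        x 0 = x₀ →
        (∀ t, t < T → x (t + 1) = γ • (A *ᵥ x t) + (1 - γ) • (B *ᵥ u t)) →
        totalCost T Q Qf R x u =
          x₀ ⬝ᵥ (Q *ᵥ x₀) + (∑ t ∈ Finset.range (T - 1), g γ B R Q (u t))
            + g γ B R Qf (u (T - 1))) ∧
    sInf {c : ℝ | ∃ u x : ℕ → Fin n → ℝ,
        (∀ t, t < T → u t ∈ stdSimplex ℝ (Fin n)) ∧
        x 0 = x₀ ∧
        (∀ t, t < T → x (t + 1) = γ • (A *ᵥ x t) + (1 - γ) • (B *ᵥ u t)) ∧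
        c = totalCost T Q Qf R x u} =
      x₀ ⬝ᵥ (Q *ᵥ x₀) + ((T : ℝ) - 1) * sInf (g γ B R Q '' stdSimplex ℝ (Fin n))
        + sInf (g γ B R Qf '' stdSimplex ℝ (Fin n)) := by
  subst hA
  have part1 : ∀ u x : ℕ → Fin n → ℝ,
      (∀ t, t < T → u t ∈ stdSimplex ℝ (Fin n)) →
      x 0 = x₀ →
      (∀ t, t < T → x (t + 1) =
        γ • ((Matrix.of fun _ _ => (n : ℝ)⁻¹ : Matrix (Fin n) (Fin n) ℝ) *ᵥ x t)
          + (1 - γ) • (B *ᵥ u t)) →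
      totalCost T Q Qf R x u =
        x₀ ⬝ᵥ (Q *ᵥ x₀) + (∑ t ∈ Finset.range (T - 1), g γ B R Q (u t))
          + g γ B R Qf (u (T - 1)) := by
    intro u x hu hx0 hrec
    exact cost_identity hT x₀ hx0
      (state_formula hn hB hu (hx0 ▸ hx₀.2) hrec)
  refine ⟨part1, ?_⟩
  -- nonempty compact simplex, minimizers exist
  have hΔne : (stdSimplex ℝ (Fin n)).Nonempty := by
    refine ⟨fun _ => (n : ℝ)⁻¹, fun i => by positivity, ?_⟩
    have hn0 : (n : ℝ) ≠ 0 := Nat.cast_ne_zero.mpr (by omega)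
    simp only [Finset.sum_const, Finset.card_univ, Fintype.card_fin, nsmul_eq_mul]
    field_simp
  obtain ⟨uQ, huQ, hminQ⟩ := (isCompact_stdSimplex ℝ (Fin n)).exists_isMinOn hΔne
    (g_continuous γ B R Q).continuousOn
  obtain ⟨uF, huF, hminF⟩ := (isCompact_stdSimplex ℝ (Fin n)).exists_isMinOn hΔne
    (g_continuous γ B R Qf).continuousOn
  have hQeq : sInf (g γ B R Q '' stdSimplex ℝ (Fin n)) = g γ B R Q uQ :=
    IsLeast.csInf_eq ⟨⟨uQ, huQ, rfl⟩, by rintro y ⟨v, hv, rfl⟩; exact hminQ hv⟩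
  have hFeq : sInf (g γ B R Qf '' stdSimplex ℝ (Fin n)) = g γ B R Qf uF :=
    IsLeast.csInf_eq ⟨⟨uF, huF, rfl⟩, by rintro y ⟨v, hv, rfl⟩; exact hminF hv⟩
  rw [hQeq, hFeq]
  set target : ℝ := x₀ ⬝ᵥ (Q *ᵥ x₀) + ((T : ℝ) - 1) * g γ B R Q uQ + g γ B R Qf uF with htarget
  apply IsLeast.csInf_eq
  constructor
  · -- membership: constant optimal controls
    set u : ℕ → Fin n → ℝ := fun t => if t = T - 1 then uF else uQ with hudef
    set x : ℕ → Fin n → ℝ := fun t => Nat.rec x₀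
      (fun t xt => γ • ((Matrix.of fun _ _ => (n : ℝ)⁻¹ : Matrix (Fin n) (Fin n) ℝ) *ᵥ xt)
        + (1 - γ) • (B *ᵥ u t)) t with hxdef
    have hu : ∀ t, t < T → u t ∈ stdSimplex ℝ (Fin n) := by
      intro t _
      simp only [hudef]
      split <;> assumption
    refine ⟨u, x, hu, rfl, fun t _ => rfl, ?_⟩
    rw [part1 u x hu rfl (fun t _ => rfl)]
    have huT : u (T - 1) = uF := by simp [hudef]
    have hsum : ∑ t ∈ Finset.range (T - 1), g γ B R Q (u t)
        = ((T : ℝ) - 1) * g γ B R Q uQ := by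
      have hconst : ∀ t ∈ Finset.range (T - 1), g γ B R Q (u t) = g γ B R Q uQ := by
        intro t ht
        have : t ≠ T - 1 := by have := Finset.mem_range.mp ht; omega
        simp [hudef, this]
      rw [Finset.sum_congr rfl hconst, Finset.sum_const, Finset.card_range, nsmul_eq_mul]
      congr 1
      push_cast [hT]
      ring
    rw [huT, hsum]
  · -- lower bound
    rintro c ⟨u, x, hu, hx0, hrec, rfl⟩
    rw [part1 u x hu hx0 hrec, htarget]
    have h1 : ((T : ℝ) - 1) * g γ B R Q uQ ≤ ∑ t ∈ Finset.range (T - 1), g γ B R Q (u t) := by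
      have : ∑ t ∈ Finset.range (T - 1), g γ B R Q uQ
          ≤ ∑ t ∈ Finset.range (T - 1), g γ B R Q (u t) :=
        Finset.sum_le_sum fun t ht =>
          hminQ (hu t (by have := Finset.mem_range.mp ht; omega))
      rw [Finset.sum_const, Finset.card_range, nsmul_eq_mul] at this
      calc ((T : ℝ) - 1) * g γ B R Q uQ = ((T - 1 : ℕ) : ℝ) * g γ B R Q uQ := by
            push_cast [hT]; ring
        _ ≤ _ := this
    have h2 : g γ B R Qf uF ≤ g γ B R Qf (u (T - 1)) := hminF (hu (T - 1) (by omega))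
    linarith
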